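/- Let θ, χ : ℝ → ℂ be Schwartz functions. Then ∫_ℝ ∫_ℝ |θ̂(ξ−η)| |η| |θ̂(η)| |χ̂(ξ)| dη dξ ≤ ( ∫_ℝ |ω| |θ̂(ω)|² dω ) · ( ∫_ℝ |χ̂(ξ)| dξ ) + ( ∫_ℝ |ω| |θ̂(ω)|² dω )^{1/2} · ( ∫_ℝ |θ̂(ω)| dω ) · ( ∫_ℝ |ξ| |χ̂(ξ)|² dξ )^{1/2}. -/

import Mathlib

open MeasureTheory

open scoped ENNReal FourierTransform

/-- The Fourier transform normalized as `f̂(ξ) = (2π)^{-1/2} ∫ f(x) e^{-ixξ} dx`. -/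
noncomputable def fourierTrans (f : ℝ → ℂ) (ξ : ℝ) : ℂ :=
  (((2 * Real.pi) ^ (-(1 / 2 : ℝ)) : ℝ) : ℂ) *
    ∫ x : ℝ, f x * Complex.exp (-Complex.I * (x : ℂ) * (ξ : ℂ))

lemma fourierTrans_eq (f : ℝ → ℂ) (ξ : ℝ) :
    fourierTrans f ξ =
      (((2 * Real.pi) ^ (-(1 / 2 : ℝ)) : ℝ) : ℂ) * (𝓕 f) (ξ / (2 * Real.pi)) := by
  rw [fourierTrans, Real.fourier_real_eq_integral_exp_smul]
  congr 1
  have key : ∀ v : ℝ, f v * Complex.exp (-Complex.I * (v : ℂ) * (ξ : ℂ)) =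
      Complex.exp (↑(-2 * Real.pi * v * (ξ / (2 * Real.pi))) * Complex.I) • f v := by
    intro v
    rw [smul_eq_mul, mul_comm]
    congr 1
    have hv : (-2 * Real.pi * v * (ξ / (2 * Real.pi))) = -(v * ξ) := by
      field_simp
    rw [hv]
    push_cast
    ring
  simp_rw [key]

lemma schwartz_abs_mul_sq_integrable (g : SchwartzMap ℝ ℂ) :
    Integrable (fun x : ℝ => |x| * ‖g x‖ ^ 2) := by
  obtain ⟨C, hC⟩ := g.decay 1 0
  refine Integrable.mono' ((g.integrable.norm).const_mul |C|)
    ((continuous_abs.mul ((g.continuous.norm).pow 2)).aestronglyMeasurable)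
    (Filter.Eventually.of_forall fun x => ?_)
  have h1 : |x| * ‖g x‖ ≤ C := by
    have := hC.2 x
    simpa [Real.norm_eq_abs, norm_iteratedFDeriv_zero] using this
  have h2 : ‖|x| * ‖g x‖ ^ 2‖ = (|x| * ‖g x‖) * ‖g x‖ := by
    rw [Real.norm_eq_abs, abs_of_nonneg (by positivity)]; ring
  rw [h2]
  calc (|x| * ‖g x‖) * ‖g x‖ ≤ C * ‖g x‖ :=
        mul_le_mul_of_nonneg_right h1 (norm_nonneg _)
    _ ≤ |C| * ‖g x‖ := mul_le_mul_of_nonneg_right (le_abs_self C) (norm_nonneg _)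

lemma fourier_facts (θ : SchwartzMap ℝ ℂ) :
    Continuous (fun ω : ℝ => ‖fourierTrans (⇑θ) ω‖) ∧
      Integrable (fun ω : ℝ => ‖fourierTrans (⇑θ) ω‖) ∧
      Integrable (fun ω : ℝ => |ω| * ‖fourierTrans (⇑θ) ω‖ ^ 2) := by
  set g : SchwartzMap ℝ ℂ := SchwartzMap.fourierTransformCLM ℂ θ with hg_def
  have hgFT : ∀ ξ : ℝ, (𝓕 ⇑θ) ξ = g ξ := fun ξ => rfl
  set c0 : ℝ := (2 * Real.pi) ^ (-(1 / 2 : ℝ)) with hc0_def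
  have hc0pos : 0 < c0 := by positivity
  have h2πpos : (0:ℝ) < 2 * Real.pi := by positivity
  have h2πne : (2 * Real.pi) ≠ 0 := ne_of_gt h2πpos
  have hnorm : ∀ ξ : ℝ, ‖fourierTrans (⇑θ) ξ‖ = c0 * ‖g (ξ / (2 * Real.pi))‖ := by
    intro ξ
    rw [fourierTrans_eq, norm_mul, hgFT, Complex.norm_real, Real.norm_eq_abs,
      abs_of_pos hc0pos]
  have hcont : Continuous (fun ω : ℝ => ‖fourierTrans (⇑θ) ω‖) := by
    have : (fun ω : ℝ => ‖fourierTrans (⇑θ) ω‖) =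
        fun ω : ℝ => c0 * ‖g (ω / (2 * Real.pi))‖ := funext hnorm
    rw [this]
    exact continuous_const.mul ((g.continuous.comp (continuous_id.div_const _)).norm)
  refine ⟨hcont, ?_, ?_⟩
  · have : (fun ω : ℝ => ‖fourierTrans (⇑θ) ω‖) =
        fun ω : ℝ => c0 * ‖g (ω / (2 * Real.pi))‖ := funext hnorm
    rw [this]
    exact ((g.integrable).norm.comp_div h2πne).const_mul c0
  · have heq : (fun ω : ℝ => |ω| * ‖fourierTrans (⇑θ) ω‖ ^ 2) =
        fun ω : ℝ => (c0 ^ 2 * (2 * Real.pi)) *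
          (|ω / (2 * Real.pi)| * ‖g (ω / (2 * Real.pi))‖ ^ 2) := by
      funext ω
      rw [hnorm, abs_div, abs_of_pos h2πpos, mul_pow]
      field_simp
    rw [heq]
    exact ((schwartz_abs_mul_sq_integrable g).comp_div h2πne).const_mul _


lemma sqrt_add_le' {x y : ℝ} (hx : 0 ≤ x) (hy : 0 ≤ y) :
    Real.sqrt (x + y) ≤ Real.sqrt x + Real.sqrt y := by
  have h : x + y ≤ (Real.sqrt x + Real.sqrt y) ^ 2 := by
    nlinarith [Real.sq_sqrt hx, Real.sq_sqrt hy, Real.sqrt_nonneg x, Real.sqrt_nonneg y,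
      mul_nonneg (Real.sqrt_nonneg x) (Real.sqrt_nonneg y)]
  calc Real.sqrt (x + y) ≤ Real.sqrt ((Real.sqrt x + Real.sqrt y) ^ 2) := Real.sqrt_le_sqrt h
    _ = Real.sqrt x + Real.sqrt y := Real.sqrt_sq (by positivity)

lemma ennreal_half_mul_self (x : ℝ≥0∞) : x ^ ((1:ℝ)/2) * x ^ ((1:ℝ)/2) = x := by
  rw [← pow_two, ← ENNReal.rpow_natCast (x ^ ((1:ℝ)/2)) 2, ← ENNReal.rpow_mul]
  norm_num

theorem key_estimate (a c : ℝ → ℝ) (ha : Continuous a) (hc : Continuous c)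
    (ha0 : ∀ x, 0 ≤ a x) (hc0 : ∀ x, 0 ≤ c x)
    (hIa : Integrable a) (hIc : Integrable c)
    (hI1 : Integrable (fun x => |x| * a x ^ 2)) (hI2 : Integrable (fun x => |x| * c x ^ 2)) :
    (∫ ξ : ℝ, ∫ η : ℝ, a (ξ - η) * |η| * a η * c ξ) ≤
      (∫ ω : ℝ, |ω| * a ω ^ 2) * (∫ ξ : ℝ, c ξ) +
        (∫ ω : ℝ, |ω| * a ω ^ 2) ^ ((1:ℝ)/2) * (∫ ω : ℝ, a ω) *
          (∫ ξ : ℝ, |ξ| * c ξ ^ 2) ^ ((1:ℝ)/2) := by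
  -- ENNReal-valued versions
  set A : ℝ → ℝ≥0∞ := fun x => ENNReal.ofReal (a x) with hA_def
  set Cc : ℝ → ℝ≥0∞ := fun x => ENNReal.ofReal (c x) with hCc_def
  set w : ℝ → ℝ≥0∞ := fun x => ENNReal.ofReal (|x| * a x ^ 2) with hw_def
  set v : ℝ → ℝ≥0∞ := fun x => ENNReal.ofReal (|x| * c x ^ 2) with hv_def
  have hAm : Measurable A := ha.measurable.ennreal_ofReal
  have hCm : Measurable Cc := hc.measurable.ennreal_ofReal
  have hwm : Measurable w := (continuous_abs.mul ((ha.pow 2))).measurable.ennreal_ofReal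
  have hvm : Measurable v := (continuous_abs.mul ((hc.pow 2))).measurable.ennreal_ofReal
  set I1 : ℝ≥0∞ := ∫⁻ ω, w ω with hI1_def
  set Ia : ℝ≥0∞ := ∫⁻ ω, A ω with hIa_def
  set Ic : ℝ≥0∞ := ∫⁻ ξ, Cc ξ with hIc_def
  set I2 : ℝ≥0∞ := ∫⁻ ξ, v ξ with hI2_def
  -- finiteness
  have fin_of : ∀ (u : ℝ → ℝ), (∀ x, 0 ≤ u x) → Integrable u →
      (∫⁻ x, ENNReal.ofReal (u x)) ≠ ∞ := by
    intro u hu0 hu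
    have := (hasFiniteIntegral_iff_ofReal (Filter.Eventually.of_forall hu0)).1 hu.2
    exact this.ne
  have hI1top : I1 ≠ ∞ := fin_of _ (fun x => by positivity) hI1
  have hIatop : Ia ≠ ∞ := fin_of _ ha0 hIa
  have hIctop : Ic ≠ ∞ := fin_of _ hc0 hIc
  have hI2top : I2 ≠ ∞ := fin_of _ (fun x => by positivity) hI2
  -- Bochner integrals equal toReal of lintegrals
  have eq_of : ∀ (u : ℝ → ℝ), (∀ x, 0 ≤ u x) → Continuous u →
      (∫ x, u x) = (∫⁻ x, ENNReal.ofReal (u x)).toReal := by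
    intro u hu0 hu
    rw [integral_eq_lintegral_of_nonneg_ae (Filter.Eventually.of_forall hu0)
      hu.aestronglyMeasurable]
  -- the product-space integrand
  set fE : ℝ × ℝ → ℝ≥0∞ :=
    fun p => A (p.1 - p.2) * ENNReal.ofReal |p.2| * A p.2 * Cc p.1 with hfE_def
  have hfEm : Measurable fE := by
    rw [hfE_def]
    apply Measurable.fun_mul
    apply Measurable.fun_mul
    apply Measurable.fun_mul
    · exact hAm.comp (measurable_fst.sub measurable_snd)
    · exact measurable_snd.abs.ennreal_ofReal
    · exact hAm.comp measurable_snd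
    · exact hCm.comp measurable_fst
  -- the two split factors
  set u1 : ℝ × ℝ → ℝ := fun p =>
    Real.sqrt |p.1 - p.2| * a (p.1 - p.2) * Real.sqrt (c p.1) with hu1_def
  set v1 : ℝ × ℝ → ℝ := fun p =>
    Real.sqrt |p.2| * a p.2 * Real.sqrt (c p.1) with hv1_def
  set u2 : ℝ × ℝ → ℝ := fun p =>
    Real.sqrt (a (p.1 - p.2)) * (Real.sqrt |p.2| * a p.2) with hu2_def
  set v2 : ℝ × ℝ → ℝ := fun p =>
    Real.sqrt (a (p.1 - p.2)) * (Real.sqrt |p.1| * c p.1) with hv2_def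
  have hcont_sub : Continuous (fun p : ℝ × ℝ => a (p.1 - p.2)) :=
    ha.comp (continuous_fst.sub continuous_snd)
  have hu1c : Continuous u1 := by
    apply Continuous.mul
    apply Continuous.mul
    · exact ((continuous_fst.sub continuous_snd).abs).sqrt
    · exact hcont_sub
    · exact (hc.comp continuous_fst).sqrt
  have hv1c : Continuous v1 := by
    apply Continuous.mul
    apply Continuous.mul
    · exact (continuous_snd.abs).sqrt
    · exact ha.comp continuous_snd
    · exact (hc.comp continuous_fst).sqrt
  have hu2c : Continuous u2 :=
    hcont_sub.sqrt.mul ((continuous_snd.abs.sqrt).mul (ha.comp continuous_snd))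
  have hv2c : Continuous v2 :=
    hcont_sub.sqrt.mul ((continuous_fst.abs.sqrt).mul (hc.comp continuous_fst))
  -- pointwise splitting
  have key_pt : ∀ p : ℝ × ℝ,
      a (p.1 - p.2) * |p.2| * a p.2 * c p.1 ≤ u1 p * v1 p + u2 p * v2 p := by
    rintro ⟨ξ, η⟩
    simp only [hu1_def, hv1_def, hu2_def, hv2_def]
    have h1 : Real.sqrt |η| ≤ Real.sqrt |ξ - η| + Real.sqrt |ξ| := by
      have habs : |η| ≤ |ξ - η| + |ξ| := by
        have : η = ξ - (ξ - η) := by ring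
        calc |η| = |ξ - (ξ - η)| := by rw [← this]
          _ ≤ |ξ| + |ξ - η| := abs_sub _ _
          _ = |ξ - η| + |ξ| := by ring
      calc Real.sqrt |η| ≤ Real.sqrt (|ξ - η| + |ξ|) := Real.sqrt_le_sqrt habs
        _ ≤ _ := sqrt_add_le' (abs_nonneg _) (abs_nonneg _)
    have e1 : Real.sqrt (c ξ) * Real.sqrt (c ξ) = c ξ := Real.mul_self_sqrt (hc0 ξ)
    have e2 : Real.sqrt (a (ξ - η)) * Real.sqrt (a (ξ - η)) = a (ξ - η) :=
      Real.mul_self_sqrt (ha0 _)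
    have e3 : Real.sqrt |η| * Real.sqrt |η| = |η| := Real.mul_self_sqrt (abs_nonneg _)
    have hnn : 0 ≤ a (ξ - η) * a η * c ξ :=
      mul_nonneg (mul_nonneg (ha0 _) (ha0 _)) (hc0 _)
    have q1 : Real.sqrt |ξ - η| * a (ξ - η) * Real.sqrt (c ξ) *
        (Real.sqrt |η| * a η * Real.sqrt (c ξ)) =
        Real.sqrt |ξ - η| * Real.sqrt |η| * (a (ξ - η) * a η * c ξ) := by
      have : Real.sqrt |ξ - η| * a (ξ - η) * Real.sqrt (c ξ) *
          (Real.sqrt |η| * a η * Real.sqrt (c ξ)) =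
          Real.sqrt |ξ - η| * Real.sqrt |η| *
            (a (ξ - η) * a η * (Real.sqrt (c ξ) * Real.sqrt (c ξ))) := by ring
      rw [this, e1]
    have q2 : Real.sqrt (a (ξ - η)) * (Real.sqrt |η| * a η) *
        (Real.sqrt (a (ξ - η)) * (Real.sqrt |ξ| * c ξ)) =
        Real.sqrt |ξ| * Real.sqrt |η| * (a (ξ - η) * a η * c ξ) := by
      have : Real.sqrt (a (ξ - η)) * (Real.sqrt |η| * a η) *
          (Real.sqrt (a (ξ - η)) * (Real.sqrt |ξ| * c ξ)) =
          Real.sqrt (a (ξ - η)) * Real.sqrt (a (ξ - η)) *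
            (Real.sqrt |ξ| * Real.sqrt |η| * (a η * c ξ)) := by ring
      rw [this, e2]; ring
    calc a (ξ - η) * |η| * a η * c ξ
        = (Real.sqrt |η| * Real.sqrt |η|) * (a (ξ - η) * a η * c ξ) := by rw [e3]; ring
      _ ≤ ((Real.sqrt |ξ - η| + Real.sqrt |ξ|) * Real.sqrt |η|) * (a (ξ - η) * a η * c ξ) := by
          apply mul_le_mul_of_nonneg_right _ hnn
          exact mul_le_mul_of_nonneg_right h1 (Real.sqrt_nonneg _)
      _ = Real.sqrt |ξ - η| * Real.sqrt |η| * (a (ξ - η) * a η * c ξ) +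
          Real.sqrt |ξ| * Real.sqrt |η| * (a (ξ - η) * a η * c ξ) := by ring
      _ = _ := by rw [← q1, ← q2]
  -- nonnegativity of the factors
  have hu10 : ∀ p, 0 ≤ u1 p := fun p =>
    mul_nonneg (mul_nonneg (Real.sqrt_nonneg _) (ha0 _)) (Real.sqrt_nonneg _)
  have hv10 : ∀ p, 0 ≤ v1 p := fun p =>
    mul_nonneg (mul_nonneg (Real.sqrt_nonneg _) (ha0 _)) (Real.sqrt_nonneg _)
  have hu20 : ∀ p, 0 ≤ u2 p := fun p =>
    mul_nonneg (Real.sqrt_nonneg _) (mul_nonneg (Real.sqrt_nonneg _) (ha0 _))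
  have hv20 : ∀ p, 0 ≤ v2 p := fun p =>
    mul_nonneg (Real.sqrt_nonneg _) (mul_nonneg (Real.sqrt_nonneg _) (hc0 _))
  -- ofReal of the 4-fold product
  have ofReal4 : ∀ ξ η : ℝ, ENNReal.ofReal (a (ξ - η) * |η| * a η * c ξ) = fE (ξ, η) := by
    intro ξ η
    simp only [hfE_def, hA_def, hCc_def]
    rw [ENNReal.ofReal_mul (mul_nonneg (mul_nonneg (ha0 _) (abs_nonneg _)) (ha0 _)),
      ENNReal.ofReal_mul (mul_nonneg (ha0 _) (abs_nonneg _)),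
      ENNReal.ofReal_mul (ha0 _)]
  -- the ENNReal splitting
  have hsplitE : ∀ p : ℝ × ℝ, fE p ≤
      ENNReal.ofReal (u1 p) * ENNReal.ofReal (v1 p) +
        ENNReal.ofReal (u2 p) * ENNReal.ofReal (v2 p) := by
    rintro ⟨ξ, η⟩
    rw [← ofReal4 ξ η, ← ENNReal.ofReal_mul (hu10 _), ← ENNReal.ofReal_mul (hu20 _),
      ← ENNReal.ofReal_add (mul_nonneg (hu10 _) (hv10 _)) (mul_nonneg (hu20 _) (hv20 _))]
    exact ENNReal.ofReal_le_ofReal (key_pt (ξ, η))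
  -- squares
  have sqE : ∀ (x : ℝ), 0 ≤ x → ENNReal.ofReal x ^ (2:ℝ) = ENNReal.ofReal (x * x) := by
    intro x hx
    rw [show ((2:ℝ)) = ((2:ℕ):ℝ) by norm_num, ENNReal.rpow_natCast, pow_two,
      ← ENNReal.ofReal_mul hx]
  have hu1sq : ∀ p : ℝ × ℝ, ENNReal.ofReal (u1 p) ^ (2:ℝ) = w (p.1 - p.2) * Cc p.1 := by
    rintro ⟨ξ, η⟩
    rw [sqE _ (hu10 _)]
    simp only [hu1_def, hw_def, hCc_def]
    have e1 : Real.sqrt (c ξ) * Real.sqrt (c ξ) = c ξ := Real.mul_self_sqrt (hc0 ξ)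
    have e2 : Real.sqrt |ξ - η| * Real.sqrt |ξ - η| = |ξ - η| :=
      Real.mul_self_sqrt (abs_nonneg _)
    have : (Real.sqrt |ξ - η| * a (ξ - η) * Real.sqrt (c ξ)) *
        (Real.sqrt |ξ - η| * a (ξ - η) * Real.sqrt (c ξ)) =
        (Real.sqrt |ξ - η| * Real.sqrt |ξ - η|) * a (ξ - η) ^ 2 *
          (Real.sqrt (c ξ) * Real.sqrt (c ξ)) := by ring
    rw [this, e1, e2, ENNReal.ofReal_mul (by positivity)]
  have hv1sq : ∀ p : ℝ × ℝ, ENNReal.ofReal (v1 p) ^ (2:ℝ) = w p.2 * Cc p.1 := by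
    rintro ⟨ξ, η⟩
    rw [sqE _ (hv10 _)]
    simp only [hv1_def, hw_def, hCc_def]
    have e1 : Real.sqrt (c ξ) * Real.sqrt (c ξ) = c ξ := Real.mul_self_sqrt (hc0 ξ)
    have e3 : Real.sqrt |η| * Real.sqrt |η| = |η| := Real.mul_self_sqrt (abs_nonneg _)
    have : (Real.sqrt |η| * a η * Real.sqrt (c ξ)) * (Real.sqrt |η| * a η * Real.sqrt (c ξ)) =
        (Real.sqrt |η| * Real.sqrt |η|) * a η ^ 2 * (Real.sqrt (c ξ) * Real.sqrt (c ξ)) := by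
      ring
    rw [this, e1, e3, ENNReal.ofReal_mul (by positivity)]
  have hu2sq : ∀ p : ℝ × ℝ, ENNReal.ofReal (u2 p) ^ (2:ℝ) = A (p.1 - p.2) * w p.2 := by
    rintro ⟨ξ, η⟩
    rw [sqE _ (hu20 _)]
    simp only [hu2_def, hw_def, hA_def]
    have e2 : Real.sqrt (a (ξ - η)) * Real.sqrt (a (ξ - η)) = a (ξ - η) :=
      Real.mul_self_sqrt (ha0 _)
    have e3 : Real.sqrt |η| * Real.sqrt |η| = |η| := Real.mul_self_sqrt (abs_nonneg _)
    have : (Real.sqrt (a (ξ - η)) * (Real.sqrt |η| * a η)) *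
        (Real.sqrt (a (ξ - η)) * (Real.sqrt |η| * a η)) =
        (Real.sqrt (a (ξ - η)) * Real.sqrt (a (ξ - η))) *
          ((Real.sqrt |η| * Real.sqrt |η|) * a η ^ 2) := by ring
    rw [this, e2, e3, ENNReal.ofReal_mul (ha0 _)]
  have hv2sq : ∀ p : ℝ × ℝ, ENNReal.ofReal (v2 p) ^ (2:ℝ) = A (p.1 - p.2) * v p.1 := by
    rintro ⟨ξ, η⟩
    rw [sqE _ (hv20 _)]
    simp only [hv2_def, hv_def, hA_def]
    have e2 : Real.sqrt (a (ξ - η)) * Real.sqrt (a (ξ - η)) = a (ξ - η) :=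
      Real.mul_self_sqrt (ha0 _)
    have e4 : Real.sqrt |ξ| * Real.sqrt |ξ| = |ξ| := Real.mul_self_sqrt (abs_nonneg _)
    have : (Real.sqrt (a (ξ - η)) * (Real.sqrt |ξ| * c ξ)) *
        (Real.sqrt (a (ξ - η)) * (Real.sqrt |ξ| * c ξ)) =
        (Real.sqrt (a (ξ - η)) * Real.sqrt (a (ξ - η))) *
          ((Real.sqrt |ξ| * Real.sqrt |ξ|) * c ξ ^ 2) := by ring
    rw [this, e2, e4, ENNReal.ofReal_mul (ha0 _)]
  -- values of the four square integrals
  have hWsubm : Measurable fun p : ℝ × ℝ => w (p.1 - p.2) :=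
    hwm.comp (measurable_fst.sub measurable_snd)
  have hAsubm : Measurable fun p : ℝ × ℝ => A (p.1 - p.2) :=
    hAm.comp (measurable_fst.sub measurable_snd)
  have S1a : (∫⁻ p : ℝ × ℝ, w (p.1 - p.2) * Cc p.1 ∂(volume.prod volume)) = I1 * Ic := by
    have hm : Measurable fun p : ℝ × ℝ => w (p.1 - p.2) * Cc p.1 :=
      hWsubm.mul (hCm.comp measurable_fst)
    rw [MeasureTheory.lintegral_prod (fun p : ℝ × ℝ => w (p.1 - p.2) * Cc p.1) hm.aemeasurable]
    have inner : ∀ ξ : ℝ, (∫⁻ η, w (ξ - η) * Cc ξ) = I1 * Cc ξ := by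
      intro ξ
      have hm2 : Measurable fun η : ℝ => w (ξ - η) :=
        hwm.comp (measurable_const.sub measurable_id)
      rw [lintegral_mul_const (Cc ξ) hm2]
      congr 1
      exact (MeasureTheory.Measure.measurePreserving_sub_left volume ξ).lintegral_comp hwm
    simp only [inner]
    rw [lintegral_const_mul _ hCm]
  have S1b : (∫⁻ p : ℝ × ℝ, w p.2 * Cc p.1 ∂(volume.prod volume)) = I1 * Ic := by
    have hm : Measurable fun p : ℝ × ℝ => w p.2 * Cc p.1 :=
      (hwm.comp measurable_snd).mul (hCm.comp measurable_fst)
    rw [MeasureTheory.lintegral_prod (fun p : ℝ × ℝ => w p.2 * Cc p.1) hm.aemeasurable]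
    have inner : ∀ ξ : ℝ, (∫⁻ η, w η * Cc ξ) = I1 * Cc ξ := by
      intro ξ
      rw [lintegral_mul_const _ hwm]
    simp only [inner]
    rw [lintegral_const_mul _ hCm]
  have S2a : (∫⁻ p : ℝ × ℝ, A (p.1 - p.2) * w p.2 ∂(volume.prod volume)) = Ia * I1 := by
    have hm : Measurable fun p : ℝ × ℝ => A (p.1 - p.2) * w p.2 :=
      hAsubm.mul (hwm.comp measurable_snd)
    rw [MeasureTheory.lintegral_prod_symm (fun p : ℝ × ℝ => A (p.1 - p.2) * w p.2)
      hm.aemeasurable]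
    have inner : ∀ η : ℝ, (∫⁻ ξ, A (ξ - η) * w η) = Ia * w η := by
      intro η
      have hm2 : Measurable fun ξ : ℝ => A (ξ - η) :=
        hAm.comp (measurable_id.sub measurable_const)
      rw [lintegral_mul_const (w η) hm2]
      congr 1
      exact (MeasureTheory.measurePreserving_sub_right volume η).lintegral_comp hAm
    simp only [inner]
    rw [lintegral_const_mul _ hwm]
  have S2b : (∫⁻ p : ℝ × ℝ, A (p.1 - p.2) * v p.1 ∂(volume.prod volume)) = Ia * I2 := by
    have hm : Measurable fun p : ℝ × ℝ => A (p.1 - p.2) * v p.1 :=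
      hAsubm.mul (hvm.comp measurable_fst)
    rw [MeasureTheory.lintegral_prod (fun p : ℝ × ℝ => A (p.1 - p.2) * v p.1) hm.aemeasurable]
    have inner : ∀ ξ : ℝ, (∫⁻ η, A (ξ - η) * v ξ) = Ia * v ξ := by
      intro ξ
      have hm2 : Measurable fun η : ℝ => A (ξ - η) :=
        hAm.comp (measurable_const.sub measurable_id)
      rw [lintegral_mul_const (v ξ) hm2]
      congr 1
      exact (MeasureTheory.Measure.measurePreserving_sub_left volume ξ).lintegral_comp hAm
    simp only [inner]
    rw [lintegral_const_mul _ hvm]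
  -- Cauchy-Schwarz in ENNReal on the product space
  have hconj : Real.HolderConjugate 2 2 := Real.holderConjugate_iff.2 ⟨one_lt_two, by norm_num⟩
  have CS : ∀ (U V : ℝ × ℝ → ℝ), Continuous U → Continuous V →
      (∫⁻ p : ℝ × ℝ, ENNReal.ofReal (U p) * ENNReal.ofReal (V p) ∂(volume.prod volume)) ≤
        (∫⁻ p : ℝ × ℝ, ENNReal.ofReal (U p) ^ (2:ℝ) ∂(volume.prod volume)) ^ ((1:ℝ)/2) *
          (∫⁻ p : ℝ × ℝ, ENNReal.ofReal (V p) ^ (2:ℝ) ∂(volume.prod volume)) ^ ((1:ℝ)/2) := by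
    intro U V hU hV
    have := ENNReal.lintegral_mul_le_Lp_mul_Lq (volume.prod volume) hconj
      (hU.measurable.ennreal_ofReal.aemeasurable) (hV.measurable.ennreal_ofReal.aemeasurable)
    simpa using this
  -- main ENNReal bound
  have hT1 : (∫⁻ p : ℝ × ℝ, ENNReal.ofReal (u1 p) * ENNReal.ofReal (v1 p)
      ∂(volume.prod volume)) ≤ I1 * Ic := by
    calc (∫⁻ p : ℝ × ℝ, ENNReal.ofReal (u1 p) * ENNReal.ofReal (v1 p) ∂(volume.prod volume))
        ≤ (∫⁻ p : ℝ × ℝ, ENNReal.ofReal (u1 p) ^ (2:ℝ) ∂(volume.prod volume)) ^ ((1:ℝ)/2) *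
          (∫⁻ p : ℝ × ℝ, ENNReal.ofReal (v1 p) ^ (2:ℝ) ∂(volume.prod volume)) ^ ((1:ℝ)/2) :=
          CS u1 v1 hu1c hv1c
      _ = (I1 * Ic) ^ ((1:ℝ)/2) * (I1 * Ic) ^ ((1:ℝ)/2) := by
          rw [show (∫⁻ p : ℝ × ℝ, ENNReal.ofReal (u1 p) ^ (2:ℝ) ∂(volume.prod volume)) =
              ∫⁻ p : ℝ × ℝ, w (p.1 - p.2) * Cc p.1 ∂(volume.prod volume) from
            lintegral_congr hu1sq,
            show (∫⁻ p : ℝ × ℝ, ENNReal.ofReal (v1 p) ^ (2:ℝ) ∂(volume.prod volume)) =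
              ∫⁻ p : ℝ × ℝ, w p.2 * Cc p.1 ∂(volume.prod volume) from lintegral_congr hv1sq,
            S1a, S1b]
      _ = I1 * Ic := ennreal_half_mul_self _
  have hT2 : (∫⁻ p : ℝ × ℝ, ENNReal.ofReal (u2 p) * ENNReal.ofReal (v2 p)
      ∂(volume.prod volume)) ≤ I1 ^ ((1:ℝ)/2) * Ia * I2 ^ ((1:ℝ)/2) := by
    calc (∫⁻ p : ℝ × ℝ, ENNReal.ofReal (u2 p) * ENNReal.ofReal (v2 p) ∂(volume.prod volume))
        ≤ (∫⁻ p : ℝ × ℝ, ENNReal.ofReal (u2 p) ^ (2:ℝ) ∂(volume.prod volume)) ^ ((1:ℝ)/2) *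
          (∫⁻ p : ℝ × ℝ, ENNReal.ofReal (v2 p) ^ (2:ℝ) ∂(volume.prod volume)) ^ ((1:ℝ)/2) :=
          CS u2 v2 hu2c hv2c
      _ = (Ia * I1) ^ ((1:ℝ)/2) * (Ia * I2) ^ ((1:ℝ)/2) := by
          rw [show (∫⁻ p : ℝ × ℝ, ENNReal.ofReal (u2 p) ^ (2:ℝ) ∂(volume.prod volume)) =
              ∫⁻ p : ℝ × ℝ, A (p.1 - p.2) * w p.2 ∂(volume.prod volume) from
            lintegral_congr hu2sq,
            show (∫⁻ p : ℝ × ℝ, ENNReal.ofReal (v2 p) ^ (2:ℝ) ∂(volume.prod volume)) =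
              ∫⁻ p : ℝ × ℝ, A (p.1 - p.2) * v p.1 ∂(volume.prod volume) from
            lintegral_congr hv2sq,
            S2a, S2b]
      _ = I1 ^ ((1:ℝ)/2) * Ia * I2 ^ ((1:ℝ)/2) := by
          rw [ENNReal.mul_rpow_of_nonneg _ _ (by norm_num : (0:ℝ) ≤ 1/2),
            ENNReal.mul_rpow_of_nonneg _ _ (by norm_num : (0:ℝ) ≤ 1/2)]
          calc Ia ^ ((1:ℝ)/2) * I1 ^ ((1:ℝ)/2) * (Ia ^ ((1:ℝ)/2) * I2 ^ ((1:ℝ)/2))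
              = (Ia ^ ((1:ℝ)/2) * Ia ^ ((1:ℝ)/2)) * (I1 ^ ((1:ℝ)/2) * I2 ^ ((1:ℝ)/2)) := by
                ring
            _ = I1 ^ ((1:ℝ)/2) * Ia * I2 ^ ((1:ℝ)/2) := by
                rw [ennreal_half_mul_self]; ring
  have hmain : (∫⁻ ξ : ℝ, ∫⁻ η : ℝ, fE (ξ, η)) ≤
      I1 * Ic + I1 ^ ((1:ℝ)/2) * Ia * I2 ^ ((1:ℝ)/2) := by
    rw [← MeasureTheory.lintegral_prod fE hfEm.aemeasurable]
    calc (∫⁻ p : ℝ × ℝ, fE p ∂(volume.prod volume))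
        ≤ ∫⁻ p : ℝ × ℝ, (ENNReal.ofReal (u1 p) * ENNReal.ofReal (v1 p) +
            ENNReal.ofReal (u2 p) * ENNReal.ofReal (v2 p)) ∂(volume.prod volume) :=
          lintegral_mono hsplitE
      _ = (∫⁻ p : ℝ × ℝ, ENNReal.ofReal (u1 p) * ENNReal.ofReal (v1 p)
            ∂(volume.prod volume)) +
          ∫⁻ p : ℝ × ℝ, ENNReal.ofReal (u2 p) * ENNReal.ofReal (v2 p)
            ∂(volume.prod volume) :=
          lintegral_add_left
            (hu1c.measurable.ennreal_ofReal.mul hv1c.measurable.ennreal_ofReal) _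
      _ ≤ I1 * Ic + I1 ^ ((1:ℝ)/2) * Ia * I2 ^ ((1:ℝ)/2) := add_le_add hT1 hT2
  -- finiteness of the bound
  have hRtop : I1 * Ic + I1 ^ ((1:ℝ)/2) * Ia * I2 ^ ((1:ℝ)/2) ≠ ∞ := by
    refine ENNReal.add_ne_top.2 ⟨ENNReal.mul_ne_top hI1top hIctop, ?_⟩
    exact ENNReal.mul_ne_top
      (ENNReal.mul_ne_top (ENNReal.rpow_ne_top_of_nonneg (by norm_num) hI1top) hIatop)
      (ENNReal.rpow_ne_top_of_nonneg (by norm_num) hI2top)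
  -- rewrite the inner Bochner integral
  have step1 : ∀ ξ : ℝ, (∫ η : ℝ, a (ξ - η) * |η| * a η * c ξ) =
      (∫⁻ η : ℝ, fE (ξ, η)).toReal := by
    intro ξ
    have hcont : Continuous fun η : ℝ => a (ξ - η) * |η| * a η * c ξ :=
      (((ha.comp (continuous_const.sub continuous_id)).mul continuous_abs).mul ha).mul
        continuous_const
    rw [integral_eq_lintegral_of_nonneg_ae (Filter.Eventually.of_forall fun η =>
      mul_nonneg (mul_nonneg (mul_nonneg (ha0 _) (abs_nonneg _)) (ha0 _)) (hc0 _))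
      hcont.aestronglyMeasurable]
    congr 1
    exact lintegral_congr fun η => ofReal4 ξ η
  have meas_inner : Measurable fun ξ : ℝ => ∫⁻ η : ℝ, fE (ξ, η) :=
    hfEm.lintegral_prod_right'
  -- real-integral identities
  have e1R : (∫ ω : ℝ, |ω| * a ω ^ 2) = I1.toReal :=
    eq_of _ (fun x => mul_nonneg (abs_nonneg _) (sq_nonneg _)) (continuous_abs.mul (ha.pow 2))
  have eaR : (∫ ω : ℝ, a ω) = Ia.toReal := eq_of _ ha0 ha
  have ecR : (∫ ξ : ℝ, c ξ) = Ic.toReal := eq_of _ hc0 hc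
  have e2R : (∫ ξ : ℝ, |ξ| * c ξ ^ 2) = I2.toReal :=
    eq_of _ (fun x => mul_nonneg (abs_nonneg _) (sq_nonneg _)) (continuous_abs.mul (hc.pow 2))
  rw [e1R, eaR, ecR, e2R]
  simp_rw [step1]
  have hne : (∫⁻ ξ : ℝ, ∫⁻ η : ℝ, fE (ξ, η)) ≠ ∞ := (hmain.trans_lt hRtop.lt_top).ne
  calc (∫ ξ : ℝ, (∫⁻ η : ℝ, fE (ξ, η)).toReal)
      = (∫⁻ ξ : ℝ, ENNReal.ofReal ((∫⁻ η : ℝ, fE (ξ, η)).toReal)).toReal :=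
        integral_eq_lintegral_of_nonneg_ae
          (Filter.Eventually.of_forall fun ξ => ENNReal.toReal_nonneg)
          meas_inner.ennreal_toReal.aestronglyMeasurable
    _ ≤ (∫⁻ ξ : ℝ, ∫⁻ η : ℝ, fE (ξ, η)).toReal :=
        ENNReal.toReal_mono hne (lintegral_mono fun ξ => ENNReal.ofReal_toReal_le)
    _ ≤ (I1 * Ic + I1 ^ ((1:ℝ)/2) * Ia * I2 ^ ((1:ℝ)/2)).toReal :=
        ENNReal.toReal_mono hRtop hmain
    _ = I1.toReal * Ic.toReal + I1.toReal ^ ((1:ℝ)/2) * Ia.toReal * I2.toReal ^ ((1:ℝ)/2) := by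
        rw [ENNReal.toReal_add (ENNReal.mul_ne_top hI1top hIctop)
          (ENNReal.mul_ne_top
            (ENNReal.mul_ne_top (ENNReal.rpow_ne_top_of_nonneg (by norm_num) hI1top) hIatop)
            (ENNReal.rpow_ne_top_of_nonneg (by norm_num) hI2top)),
          ENNReal.toReal_mul, ENNReal.toReal_mul, ENNReal.toReal_mul,
          ENNReal.toReal_rpow, ENNReal.toReal_rpow]

/-- Duality estimate used to bound the pairing `⟨θ Λθ, χ⟩` for Schwartz `θ, χ`:
`∫∫ |θ̂(ξ−η)| |η| |θ̂(η)| |χ̂(ξ)| dη dξ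
  ≤ ‖Λ^{1/2}θ‖²_{L²} ‖χ̂‖_{L¹} + ‖Λ^{1/2}θ‖_{L²} ‖θ̂‖_{L¹} ‖Λ^{1/2}χ‖_{L²}`. -/
theorem duality_estimate (θ χ : SchwartzMap ℝ ℂ) :
    (∫ ξ : ℝ, ∫ η : ℝ,
        ‖fourierTrans (⇑θ) (ξ - η)‖ * |η| * ‖fourierTrans (⇑θ) η‖ * ‖fourierTrans (⇑χ) ξ‖) ≤
      (∫ ω : ℝ, |ω| * ‖fourierTrans (⇑θ) ω‖ ^ 2) * (∫ ξ : ℝ, ‖fourierTrans (⇑χ) ξ‖) +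
        (∫ ω : ℝ, |ω| * ‖fourierTrans (⇑θ) ω‖ ^ 2) ^ ((1 : ℝ) / 2) *
          (∫ ω : ℝ, ‖fourierTrans (⇑θ) ω‖) *
          (∫ ξ : ℝ, |ξ| * ‖fourierTrans (⇑χ) ξ‖ ^ 2) ^ ((1 : ℝ) / 2) := by
  obtain ⟨haC, haI, haI1⟩ := fourier_facts θ
  obtain ⟨hcC, hcI, hcI1⟩ := fourier_facts χ
  exact key_estimate (fun ω => ‖fourierTrans (⇑θ) ω‖) (fun ξ => ‖fourierTrans (⇑χ) ξ‖)
    haC hcC (fun x => norm_nonneg _) (fun x => norm_nonneg _) haI hcI haI1 hcI1
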